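/- Let C(n,u) be a t-level EII code over a finite field F with u_t = n, in which each horizontal code C_i is an MDS [n, n−u_i, u_i+1] code over F and each vertical code V_{t−1−i} is an MDS [m, m−ŝ_{i+1}, ŝ_{i+1}+1] code over F^{u_{i+1}−u_i}, for 0 ≤ i ≤ t−1. Then C(n,u) has F-dimension mn − Σ_{i=0}^{t} s_i·u_i and minimum distance d ≥ min{ (u_i+1)(ŝ_{i+1}+1) : 0 ≤ i ≤ t−1 }. -/

import Mathlib

set_option maxHeartbeats 1000000
set_option synthInstance.maxHeartbeats 1000000
set_option linter.unusedSectionVars false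
set_option linter.unusedVariables false


open scoped BigOperators

section Defs

variable {F : Type*} [Field F]

/-- `C` has minimum (symbol-)Hamming distance exactly `d`. -/
def HasMinDist {ι S : Type*} [Fintype ι] [Zero S] [DecidableEq S]
    (C : Set (ι → S)) (d : ℕ) : Prop :=
  (∀ c ∈ C, c ≠ 0 → d ≤ hammingNorm c) ∧ ∃ c ∈ C, c ≠ 0 ∧ hammingNorm c = d

/-- weight of an `m × n` array: the number of nonzero entries. -/
def arrayWt [DecidableEq F] {m n : ℕ} (A : Matrix (Fin m) (Fin n) F) : ℕ :=
  hammingNorm (fun p : Fin m × Fin n => A p.1 p.2)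

/-- `C` admits a systematic encoder on its first `k` coordinates. -/
def SystematicOn {n : ℕ} (C : Submodule F (Fin n → F)) (k : ℕ) : Prop :=
  Function.Bijective (fun (c : C) (i : Fin k) =>
    if h : (i : ℕ) < n then (c : Fin n → F) ⟨i, h⟩ else 0)

/-- symbols of the array in columns `a, a+1, ..., a+w-1`. -/
def colSymb [Zero F] {m n : ℕ} (A : Matrix (Fin m) (Fin n) F) (a w : ℕ) :
    Fin m → Fin w → F :=
  fun r k => if hk : a + (k : ℕ) < n then A r ⟨a + k, hk⟩ else 0

/-- the 1-level EII code with horizontal code `C0`, vertical code `V0` over `F^w`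
(occupying columns `a,…,a+w-1`), and `a` initial zero columns. -/
def OneLevelEII {m n w : ℕ} (C0 : Submodule F (Fin n → F))
    (V0 : Submodule F (Fin m → Fin w → F)) (a : ℕ) :
    Set (Matrix (Fin m) (Fin n) F) :=
  { A | (∀ r (c : Fin n), (c : ℕ) < a → A r c = 0) ∧ (∀ r, A r ∈ C0) ∧
        colSymb A a w ∈ V0 }

/-- the sum of the 1-level EII component codes of levels `a ≤ i < t`, where level `i`
has horizontal code `Chor i`, vertical code `Vc i` over `F^{u(i+1)-u(i)}`, and
`n - u(i+1)` initial zero columns. -/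
def EIICodeRange {m n : ℕ} (a t : ℕ) (u : ℕ → ℕ)
    (Chor : ℕ → Submodule F (Fin n → F))
    (Vc : (i : ℕ) → Submodule F (Fin m → Fin (u (i + 1) - u i) → F)) :
    Set (Matrix (Fin m) (Fin n) F) :=
  { A | ∃ g : ℕ → Matrix (Fin m) (Fin n) F,
        (∀ i, a ≤ i → i < t → g i ∈ OneLevelEII (Chor i) (Vc i) (n - u (i + 1))) ∧
        A = ∑ i ∈ Finset.Ico a t, g i }

/-- the t-level EII code: sum of the 1-level EII component codes of levels `0 ≤ i < t`. -/
def EIICode {m n : ℕ} (t : ℕ) (u : ℕ → ℕ)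
    (Chor : ℕ → Submodule F (Fin n → F))
    (Vc : (i : ℕ) → Submodule F (Fin m → Fin (u (i + 1) - u i) → F)) :
    Set (Matrix (Fin m) (Fin n) F) :=
  EIICodeRange 0 t u Chor Vc

end Defs

section Aux
variable {F : Type*} [Field F] [DecidableEq F] {t n m : ℕ}

lemma card_tail (n b : ℕ) :
    (Finset.univ.filter fun j : Fin n => b ≤ (j : ℕ)).card = n - b := by
  have h : (Finset.univ.filter fun j : Fin n => b ≤ (j : ℕ))
      = Finset.map ⟨fun k : Fin (n - b) => (⟨b + k, by omega⟩ : Fin n),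
          by intro x y hxy; simpa [Fin.ext_iff] using hxy⟩ Finset.univ := by
    ext j
    simp only [Finset.mem_filter, Finset.mem_univ, true_and, Finset.mem_map,
      Function.Embedding.coeFn_mk, Fin.ext_iff]
    constructor
    · intro hbj
      exact ⟨⟨(j : ℕ) - b, by omega⟩, by show b + ((j : ℕ) - b) = (j : ℕ); omega⟩
    · rintro ⟨k, hk⟩; change b + (k : ℕ) = (j : ℕ) at hk; omega
  rw [h, Finset.card_map, Finset.card_univ, Fintype.card_fin]

lemma wt_le_of_prefix_zero {c : Fin n → F} {b : ℕ}
    (h : ∀ j : Fin n, (j : ℕ) < b → c j = 0) : hammingNorm c ≤ n - b := by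
  rw [hammingNorm, ← card_tail n b]
  apply Finset.card_le_card
  intro j hj
  simp only [Finset.mem_filter, Finset.mem_univ, true_and] at hj ⊢
  by_contra hb
  exact hj (h j (by omega))

lemma short_zero {C : Submodule F (Fin n → F)} {v : ℕ}
    (hd : HasMinDist (C : Set (Fin n → F)) (v + 1)) {c : Fin n → F}
    (hc : c ∈ C) (h0 : ∀ j : Fin n, (j : ℕ) < n - v → c j = 0) : c = 0 := by
  by_contra hne
  have h1 := hd.1 c hc hne
  have h2 : hammingNorm c ≤ n - (n - v) := wt_le_of_prefix_zero h0
  omega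

/-- a row in `Chor i` vanishing on the first `n - u(i+1)` coordinates and on the band
`[n-u(i+1), n-u i)` is zero. -/
lemma row_zero (u : ℕ → ℕ) (Chor : ℕ → Submodule F (Fin n → F)) {i : ℕ}
    (hle1 : u i ≤ u (i + 1)) (hle2 : u (i + 1) ≤ n)
    (hd : HasMinDist ((Chor i : Submodule F (Fin n → F)) : Set (Fin n → F)) (u i + 1))
    {c : Fin n → F} (hc : c ∈ Chor i)
    (h0 : ∀ j : Fin n, (j : ℕ) < n - u (i + 1) → c j = 0)
    (hb : ∀ k : Fin (u (i + 1) - u i),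
      (if h : n - u (i + 1) + (k : ℕ) < n then c ⟨n - u (i + 1) + k, h⟩ else 0) = 0) :
    c = 0 := by
  refine short_zero hd hc ?_
  intro j hj
  by_cases h1 : (j : ℕ) < n - u (i + 1)
  · exact h0 j h1
  · have hk : (j : ℕ) - (n - u (i + 1)) < u (i + 1) - u i := by omega
    have h3 := hb ⟨(j : ℕ) - (n - u (i + 1)), hk⟩
    have hlt : n - u (i + 1) + ((j : ℕ) - (n - u (i + 1))) < n := by omega
    rw [dif_pos hlt] at h3
    have hje : (⟨n - u (i + 1) + ((j : ℕ) - (n - u (i + 1))), hlt⟩ : Fin n) = j := by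
      apply Fin.ext; simp; omega
    rwa [hje] at h3

/-- projection to the first `b` coordinates. -/
def projPre (b : ℕ) : (Fin n → F) →ₗ[F] (Fin b → F) where
  toFun c := fun k => if h : (k : ℕ) < n then c ⟨k, h⟩ else 0
  map_add' c d := by funext k; by_cases h : (k : ℕ) < n <;> simp [h]
  map_smul' r c := by funext k; by_cases h : (k : ℕ) < n <;> simp [h]

lemma projPre_apply (b : ℕ) (c : Fin n → F) (k : Fin b) :
    projPre b c k = if h : (k : ℕ) < n then c ⟨k, h⟩ else 0 := rfl

/-- padding `F^w` into `F^b` starting at position `a`. -/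
def padMap (a w b : ℕ) : (Fin w → F) →ₗ[F] (Fin b → F) where
  toFun x := fun j => if h : a ≤ (j : ℕ) ∧ (j : ℕ) - a < w then x ⟨(j : ℕ) - a, h.2⟩ else 0
  map_add' x y := by funext j; by_cases h : a ≤ (j : ℕ) ∧ (j : ℕ) - a < w <;> simp [h]
  map_smul' r x := by funext j; by_cases h : a ≤ (j : ℕ) ∧ (j : ℕ) - a < w <;> simp [h]

lemma padMap_apply (a w b : ℕ) (x : Fin w → F) (j : Fin b) :
    padMap a w b x j
      = if h : a ≤ (j : ℕ) ∧ (j : ℕ) - a < w then x ⟨(j : ℕ) - a, h.2⟩ else 0 := rfl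

lemma padMap_lt (a w b : ℕ) (x : Fin w → F) (j : Fin b) (hj : (j : ℕ) < a) :
    padMap a w b x j = 0 := by
  rw [padMap_apply, dif_neg]; omega

lemma padMap_band (a w b : ℕ) (x : Fin w → F) (j : Fin b) (k : Fin w)
    (hj : (j : ℕ) = a + (k : ℕ)) : padMap a w b x j = x k := by
  rw [padMap_apply, dif_pos (by omega)]
  congr 1
  apply Fin.ext
  simp; omega

lemma padMap_inj (a w b : ℕ) (hab : a + w ≤ b) {x : Fin w → F}
    (hx : padMap a w b x = 0) : x = 0 := by
  funext k
  have h := congrFun hx ⟨a + (k : ℕ), by omega⟩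
  rw [padMap_band a w b x _ k rfl] at h
  exact h

variable (u : ℕ → ℕ) (Chor : ℕ → Submodule F (Fin n → F))

/-- the systematic projection of `Chor i` to its first `n - u i` coordinates. -/
def piC (i : ℕ) : ↥(Chor i) →ₗ[F] (Fin (n - u i) → F) :=
  (projPre (n - u i)) ∘ₗ (Chor i).subtype

lemma piC_apply (i : ℕ) (c : ↥(Chor i)) (k : Fin (n - u i)) :
    piC u Chor i c k = if h : (k : ℕ) < n then (c : Fin n → F) ⟨k, h⟩ else 0 := rfl

lemma piC_inj {i : ℕ}
    (hd : HasMinDist ((Chor i : Submodule F (Fin n → F)) : Set (Fin n → F)) (u i + 1)) :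
    Function.Injective (piC u Chor i) := by
  have h0 : ∀ x, piC u Chor i x = 0 → x = 0 := by
    intro x hx
    have hc : (x : Fin n → F) = 0 := by
      refine short_zero hd x.2 ?_
      intro j hj
      have h2 := congrFun hx ⟨(j : ℕ), hj⟩
      rw [piC_apply, dif_pos j.2] at h2
      simpa using h2
    exact Subtype.ext hc
  exact LinearMap.ker_eq_bot.mp (LinearMap.ker_eq_bot'.mpr h0)

lemma piC_bij {i : ℕ} (hdim : Module.finrank F (Chor i) = n - u i)
    (hd : HasMinDist ((Chor i : Submodule F (Fin n → F)) : Set (Fin n → F)) (u i + 1)) :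
    Function.Bijective (piC u Chor i) := by
  have hinj := piC_inj u Chor hd
  refine ⟨hinj, ?_⟩
  rw [← LinearMap.range_eq_top]
  apply Submodule.eq_top_of_finrank_eq
  rw [LinearMap.finrank_range_of_inj hinj, hdim, Module.finrank_fin_fun]

/-- the systematic encoder of `Chor i`, inverse to `piC`. -/
noncomputable def chEquiv (i : ℕ) (hbij : Function.Bijective (piC u Chor i)) :
    ↥(Chor i) ≃ₗ[F] (Fin (n - u i) → F) :=
  LinearEquiv.ofBijective _ hbij

lemma chEquiv_apply (i : ℕ) (hbij : Function.Bijective (piC u Chor i)) (c : ↥(Chor i)) :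
    chEquiv u Chor i hbij c = piC u Chor i c := rfl

lemma chEquiv_symm_coord (i : ℕ) (hbij : Function.Bijective (piC u Chor i))
    (y : Fin (n - u i) → F) (j : Fin n) (hj : (j : ℕ) < n - u i) :
    (((chEquiv u Chor i hbij).symm y : ↥(Chor i)) : Fin n → F) j = y ⟨(j : ℕ), hj⟩ := by
  have h1 : piC u Chor i ((chEquiv u Chor i hbij).symm y) = y := by
    rw [← chEquiv_apply u Chor i hbij]
    exact (chEquiv u Chor i hbij).apply_symm_apply y
  have h2 := congrFun h1 ⟨(j : ℕ), hj⟩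
  rw [piC_apply, dif_pos j.2] at h2
  simpa using h2

end Aux

section Aux2
variable {F : Type*} [Field F] [DecidableEq F] {t n m : ℕ}
variable (u : ℕ → ℕ) (Chor : ℕ → Submodule F (Fin n → F))

/-- the encoder of the `i`-th component code: encodes the vertical symbols `x`
(placed in columns `n-u(i+1), …, n-u(i)-1`) into rows of `Chor i`. -/
noncomputable def psiF (i : ℕ) (hbij : Function.Bijective (piC u Chor i))
    (x : Fin m → Fin (u (i + 1) - u i) → F) : Matrix (Fin m) (Fin n) F :=
  Matrix.of fun r =>
    (((chEquiv u Chor i hbij).symm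
        (padMap (n - u (i + 1)) (u (i + 1) - u i) (n - u i) (x r)) : ↥(Chor i)) : Fin n → F)

lemma psiF_row (i : ℕ) (hbij : Function.Bijective (piC u Chor i))
    (x : Fin m → Fin (u (i + 1) - u i) → F) (r : Fin m) :
    psiF u Chor i hbij x r
      = (((chEquiv u Chor i hbij).symm
          (padMap (n - u (i + 1)) (u (i + 1) - u i) (n - u i) (x r)) : ↥(Chor i)) : Fin n → F) := rfl

lemma psiF_add (i : ℕ) (hbij : Function.Bijective (piC u Chor i))
    (x y : Fin m → Fin (u (i + 1) - u i) → F) :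
    psiF u Chor i hbij (x + y) = psiF u Chor i hbij x + psiF u Chor i hbij y := by
  funext r c
  show psiF u Chor i hbij (x + y) r c
    = psiF u Chor i hbij x r c + psiF u Chor i hbij y r c
  rw [psiF_row, psiF_row, psiF_row]
  simp only [Pi.add_apply, map_add]
  rfl

lemma psiF_smul (i : ℕ) (hbij : Function.Bijective (piC u Chor i))
    (a : F) (x : Fin m → Fin (u (i + 1) - u i) → F) :
    psiF u Chor i hbij (a • x) = a • psiF u Chor i hbij x := by
  funext r c
  show psiF u Chor i hbij (a • x) r c = a • psiF u Chor i hbij x r c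
  rw [psiF_row, psiF_row]
  simp only [Pi.smul_apply, map_smul]
  rfl

lemma psiF_row_mem (i : ℕ) (hbij : Function.Bijective (piC u Chor i))
    (x : Fin m → Fin (u (i + 1) - u i) → F) (r : Fin m) :
    psiF u Chor i hbij x r ∈ Chor i := by
  rw [psiF_row]
  exact SetLike.coe_mem _

lemma psiF_prefix (i : ℕ) (hbij : Function.Bijective (piC u Chor i))
    (hle1 : u i ≤ u (i + 1))
    (x : Fin m → Fin (u (i + 1) - u i) → F) (r : Fin m) (j : Fin n)
    (hj : (j : ℕ) < n - u (i + 1)) : psiF u Chor i hbij x r j = 0 := by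
  have hj2 : (j : ℕ) < n - u i := by omega
  rw [psiF_row, chEquiv_symm_coord u Chor i hbij _ j hj2]
  exact padMap_lt _ _ _ _ _ hj

lemma psiF_colSymb (i : ℕ) (hbij : Function.Bijective (piC u Chor i))
    (hlt : u i < u (i + 1)) (hle2 : u (i + 1) ≤ n)
    (x : Fin m → Fin (u (i + 1) - u i) → F) :
    colSymb (psiF u Chor i hbij x) (n - u (i + 1)) (u (i + 1) - u i) = x := by
  funext r k
  have hk : n - u (i + 1) + (k : ℕ) < n - u i := by omega
  have hkn : n - u (i + 1) + (k : ℕ) < n := by omega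
  show (if hk : n - u (i + 1) + (k : ℕ) < n
      then psiF u Chor i hbij x r ⟨n - u (i + 1) + k, hk⟩ else 0) = x r k
  rw [dif_pos hkn, psiF_row,
    chEquiv_symm_coord u Chor i hbij _ ⟨n - u (i + 1) + (k : ℕ), hkn⟩ hk]
  exact padMap_band _ _ _ _ _ k rfl

lemma psiF_eq_zero (i : ℕ) (hbij : Function.Bijective (piC u Chor i))
    (hlt : u i < u (i + 1)) (hle2 : u (i + 1) ≤ n)
    {x : Fin m → Fin (u (i + 1) - u i) → F}
    (hx : psiF u Chor i hbij x = 0) : x = 0 := by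
  have h := psiF_colSymb u Chor i hbij hlt hle2 x
  rw [hx] at h
  funext r k
  have h2 := congrFun (congrFun h r) k
  rw [colSymb] at h2
  simp only [Matrix.zero_apply, dite_eq_ite, ite_self] at h2
  exact h2.symm ▸ rfl

lemma psiF_mem (i : ℕ) (hbij : Function.Bijective (piC u Chor i))
    (hlt : u i < u (i + 1)) (hle2 : u (i + 1) ≤ n)
    (Vc : (i : ℕ) → Submodule F (Fin m → Fin (u (i + 1) - u i) → F))
    {x : Fin m → Fin (u (i + 1) - u i) → F} (hx : x ∈ Vc i) :
    psiF u Chor i hbij x ∈ OneLevelEII (Chor i) (Vc i) (n - u (i + 1)) := by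
  refine ⟨fun r j hj => psiF_prefix u Chor i hbij (le_of_lt hlt) x r j hj,
    fun r => psiF_row_mem u Chor i hbij x r, ?_⟩
  rw [psiF_colSymb u Chor i hbij hlt hle2]
  exact hx

lemma psiF_recover (i : ℕ) (hbij : Function.Bijective (piC u Chor i))
    (hlt : u i < u (i + 1)) (hle2 : u (i + 1) ≤ n)
    (Vc : (i : ℕ) → Submodule F (Fin m → Fin (u (i + 1) - u i) → F))
    {A : Matrix (Fin m) (Fin n) F}
    (hA : A ∈ OneLevelEII (Chor i) (Vc i) (n - u (i + 1))) :
    psiF u Chor i hbij (colSymb A (n - u (i + 1)) (u (i + 1) - u i)) = A := by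
  obtain ⟨hpre, hrow, _⟩ := hA
  funext r j
  have key : ((chEquiv u Chor i hbij).symm
      (padMap (n - u (i + 1)) (u (i + 1) - u i) (n - u i)
        (colSymb A (n - u (i + 1)) (u (i + 1) - u i) r)) : ↥(Chor i))
      = ⟨A r, hrow r⟩ := by
    rw [LinearEquiv.symm_apply_eq]
    funext k
    rw [chEquiv_apply, piC_apply, dif_pos (by omega : (k : ℕ) < n)]
    by_cases hk : (k : ℕ) < n - u (i + 1)
    · rw [padMap_lt _ _ _ _ _ hk]
      exact (hpre r ⟨(k : ℕ), by omega⟩ hk).symm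
    · have hk2 : (k : ℕ) - (n - u (i + 1)) < u (i + 1) - u i := by omega
      rw [padMap_band _ _ _ _ k ⟨(k : ℕ) - (n - u (i + 1)), hk2⟩ (by simp only [Fin.val_mk]; omega)]
      show (if h : n - u (i + 1) + ((k : ℕ) - (n - u (i + 1))) < n
        then A r ⟨n - u (i + 1) + ((k : ℕ) - (n - u (i + 1))), h⟩ else 0) = _
      rw [dif_pos (by omega : n - u (i + 1) + ((k : ℕ) - (n - u (i + 1))) < n)]
      congr 1
      apply Fin.ext
      simp; omega
  rw [psiF_row, key]

/-- nestedness chain. -/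
lemma chor_anti (hnest : ∀ i, i + 1 < t → Chor (i + 1) < Chor i) :
    ∀ i j, i ≤ j → j < t → Chor j ≤ Chor i := by
  intro i j hij hjt
  induction j with
  | zero => cases Nat.le_zero.mp hij; exact le_refl _
  | succ j ih =>
    rcases Nat.lt_or_ge i (j + 1) with h | h
    · exact le_trans (le_of_lt (hnest j hjt)) (ih (by omega) (by omega))
    · have : i = j + 1 := by omega
      subst this; exact le_refl _

/-- rowwise directness of the component codes. -/
lemma eii_direct (hnest : ∀ i, i + 1 < t → Chor (i + 1) < Chor i)
    (hu : ∀ i < t, u i < u (i + 1)) (hun : ∀ i, i ≤ t → u i ≤ n)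
    (hCdist : ∀ i < t, HasMinDist ((Chor i : Submodule F (Fin n → F)) : Set (Fin n → F)) (u i + 1)) :
    ∀ K a, t ≤ a + K → ∀ c : ℕ → (Fin n → F),
      (∀ i, a ≤ i → i < t → c i ∈ Chor i) →
      (∀ i, a ≤ i → i < t → ∀ j : Fin n, (j : ℕ) < n - u (i + 1) → c i j = 0) →
      (∑ i ∈ Finset.Ico a t, c i) = 0 →
      ∀ i, a ≤ i → i < t → c i = 0 := by
  intro K
  induction K with
  | zero => intro a ha c _ _ _ i hai hit; omega
  | succ K ih =>
    intro a ha c hmem hpre hsum i hai hit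
    rcases Nat.lt_or_ge a t with hat | hat
    swap
    · omega
    have hsplit : c a + ∑ j ∈ Finset.Ico (a + 1) t, c j = 0 := by
      rw [← Finset.sum_eq_sum_Ico_succ_bot hat c]
      exact hsum
    have hca : c a = 0 := by
      rcases Nat.lt_or_ge (a + 1) t with hat1 | hat1
      · -- c a = - sum of higher components, all in Chor (a+1)
        have hmem1 : c a ∈ Chor (a + 1) := by
          have : c a = -∑ j ∈ Finset.Ico (a + 1) t, c j :=
            eq_neg_of_add_eq_zero_left hsplit
          rw [this]
          refine Submodule.neg_mem _ (Submodule.sum_mem _ ?_)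
          intro j hj
          rw [Finset.mem_Ico] at hj
          exact chor_anti Chor hnest (a + 1) j hj.1 hj.2 (hmem j (by omega) hj.2)
        refine short_zero (hCdist (a + 1) hat1) hmem1 ?_
        intro j hj
        exact hpre a (le_refl a) hat j hj
      · -- a + 1 = t : the sum is just c a, but also need distance? no: sum empty
        have : Finset.Ico (a + 1) t = ∅ := by
          apply Finset.Ico_eq_empty; omega
        rw [this, Finset.sum_empty, add_zero] at hsplit
        exact hsplit
    rcases Nat.eq_or_lt_of_le hai with heq | hlt2
    · rw [← heq]; exact hca
    · have hsum1 : (∑ j ∈ Finset.Ico (a + 1) t, c j) = 0 := by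
        rw [hca, zero_add] at hsplit; exact hsplit
      exact ih (a + 1) (by omega) c (fun j h1 h2 => hmem j (by omega) h2)
        (fun j h1 h2 => hpre j (by omega) h2) hsum1 i hlt2 hit

end Aux2

section Arith

lemma swapsum (s f : ℕ → ℤ) :
    ∀ T : ℕ, ∑ i ∈ Finset.range T, (∑ j ∈ Finset.Icc (i + 1) T, s j) * (f (i + 1) - f i)
      = ∑ j ∈ Finset.Icc 1 T, s j * (f j - f 0) := by
  intro T
  induction T with
  | zero => simp
  | succ T ihT =>
    rw [Finset.sum_range_succ]
    have h1 : ∀ i ∈ Finset.range T,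
        (∑ j ∈ Finset.Icc (i + 1) (T + 1), s j) * (f (i + 1) - f i)
        = (∑ j ∈ Finset.Icc (i + 1) T, s j) * (f (i + 1) - f i)
          + s (T + 1) * (f (i + 1) - f i) := by
      intro i hi
      rw [Finset.mem_range] at hi
      rw [Finset.sum_Icc_succ_top (by omega)]
      ring
    rw [Finset.sum_congr rfl h1, Finset.sum_add_distrib, ihT, ← Finset.mul_sum,
      Finset.sum_range_sub f, Finset.Icc_self, Finset.sum_singleton,
      Finset.sum_Icc_succ_top (by omega : 1 ≤ T + 1)]
    ring

/-- the dimension count, in `ℕ`. -/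
lemma dim_count {t n m : ℕ} (u s : ℕ → ℕ)
    (hu : ∀ i < t, u i < u (i + 1)) (hutn : u t = n)
    (hm : m = ∑ i ∈ Finset.range (t + 1), s i) (ht : 1 ≤ t) :
    ∑ i ∈ Finset.range t, (m - ∑ j ∈ Finset.Icc (i + 1) t, s j) * (u (i + 1) - u i)
      = m * n - ∑ i ∈ Finset.range (t + 1), s i * u i := by
  -- basic facts
  have hmono : ∀ i j, i ≤ j → j ≤ t → u i ≤ u j := by
    intro i j hij hjt
    induction j with
    | zero => cases Nat.le_zero.mp hij; exact le_refl _
    | succ j ihj =>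
      rcases Nat.lt_or_ge i (j + 1) with h | h
      · exact le_trans (ihj (by omega) (by omega)) (le_of_lt (hu j (by omega)))
      · have : i = j + 1 := by omega
        subst this; exact le_refl _
  have hSle : ∀ i, (∑ j ∈ Finset.Icc (i + 1) t, s j) ≤ m := by
    intro i
    rw [hm]
    apply Finset.sum_le_sum_of_subset
    intro j hj
    rw [Finset.mem_Icc] at hj
    rw [Finset.mem_range]; omega
  -- cast everything to ℤ
  have hX : ((∑ i ∈ Finset.range t,
      (m - ∑ j ∈ Finset.Icc (i + 1) t, s j) * (u (i + 1) - u i) : ℕ) : ℤ)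
      = ∑ i ∈ Finset.range t,
        ((m : ℤ) - ∑ j ∈ Finset.Icc (i + 1) t, (s j : ℤ))
          * ((u (i + 1) : ℤ) - (u i : ℤ)) := by
    push_cast
    refine Finset.sum_congr rfl ?_
    intro i hi
    rw [Finset.mem_range] at hi
    rw [Nat.cast_sub (hSle i), Nat.cast_sub (le_of_lt (hu i hi))]
    push_cast
    ring
  have hswap := swapsum (fun j => (s j : ℤ)) (fun j => (u j : ℤ)) t
  have htel : (∑ i ∈ Finset.range t, ((u (i + 1) : ℤ) - (u i : ℤ))) = (u t : ℤ) - (u 0 : ℤ) :=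
    Finset.sum_range_sub (fun j => (u j : ℤ)) t
  have hexp : ∑ i ∈ Finset.range t,
      ((m : ℤ) - ∑ j ∈ Finset.Icc (i + 1) t, (s j : ℤ)) * ((u (i + 1) : ℤ) - (u i : ℤ))
      = (m : ℤ) * ((u t : ℤ) - (u 0 : ℤ))
        - ∑ j ∈ Finset.Icc 1 t, (s j : ℤ) * ((u j : ℤ) - (u 0 : ℤ)) := by
    rw [← hswap, ← htel]
    rw [Finset.mul_sum, ← Finset.sum_sub_distrib]
    refine Finset.sum_congr rfl ?_
    intro i _
    ring
  -- the Y side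
  have hY : ((∑ i ∈ Finset.range (t + 1), s i * u i : ℕ) : ℤ)
      = (s 0 : ℤ) * (u 0 : ℤ) + ∑ j ∈ Finset.Icc 1 t, (s j : ℤ) * (u j : ℤ) := by
    push_cast
    rw [Finset.sum_range_succ' (fun i => (s i : ℤ) * (u i : ℤ)) t]
    rw [← Finset.Ico_add_one_right_eq_Icc 1 t, Finset.sum_Ico_eq_sum_range]
    rw [add_comm]
    refine congrArg _ ?_
    refine Finset.sum_congr rfl ?_
    intro i _
    rw [add_comm 1 i]
  have hmZ : (m : ℤ) = (s 0 : ℤ) + ∑ j ∈ Finset.Icc 1 t, (s j : ℤ) := by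
    rw [hm]
    push_cast
    rw [Finset.sum_range_succ' (fun i => (s i : ℤ)) t]
    rw [← Finset.Ico_add_one_right_eq_Icc 1 t, Finset.sum_Ico_eq_sum_range]
    rw [add_comm]
    refine congrArg _ ?_
    refine Finset.sum_congr rfl ?_
    intro i _
    rw [add_comm 1 i]
  have hsub : ∑ j ∈ Finset.Icc 1 t, (s j : ℤ) * ((u j : ℤ) - (u 0 : ℤ))
      = ∑ j ∈ Finset.Icc 1 t, (s j : ℤ) * (u j : ℤ)
        - (∑ j ∈ Finset.Icc 1 t, (s j : ℤ)) * (u 0 : ℤ) := by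
    rw [Finset.sum_mul, ← Finset.sum_sub_distrib]
    refine Finset.sum_congr rfl ?_
    intro i _
    ring
  -- combine in ℤ
  have hkey : ((∑ i ∈ Finset.range t,
      (m - ∑ j ∈ Finset.Icc (i + 1) t, s j) * (u (i + 1) - u i) : ℕ) : ℤ)
      + ((∑ i ∈ Finset.range (t + 1), s i * u i : ℕ) : ℤ) = (m : ℤ) * (n : ℤ) := by
    rw [hX, hexp, hY, hsub, ← hutn]
    linear_combination (-(u 0 : ℤ)) * hmZ
  have hYle : (∑ i ∈ Finset.range (t + 1), s i * u i) ≤ m * n := by omega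
  omega

end Arith

section Count
variable {F : Type*} [Field F] [DecidableEq F] {n m : ℕ}

lemma arrayWt_eq_sum (A : Matrix (Fin m) (Fin n) F) :
    arrayWt A = ∑ r : Fin m, hammingNorm (A r) := by
  rw [arrayWt, hammingNorm]
  simp only [Finset.card_filter, Fintype.sum_prod_type]
  refine Finset.sum_congr rfl ?_
  intro r _
  rw [hammingNorm, Finset.card_filter]

end Count

section Closure
variable {F : Type*} [Field F] {n m : ℕ}

lemma colSymb_zeroM (a w : ℕ) : colSymb (0 : Matrix (Fin m) (Fin n) F) a w = 0 := by
  funext r k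
  rw [colSymb]
  split_ifs <;> rfl

lemma colSymb_addM (A B : Matrix (Fin m) (Fin n) F) (a w : ℕ) :
    colSymb (A + B) a w = colSymb A a w + colSymb B a w := by
  funext r k
  show colSymb (A + B) a w r k = colSymb A a w r k + colSymb B a w r k
  rw [colSymb, colSymb, colSymb]
  split_ifs with h
  · exact Matrix.add_apply A B r _
  · simp

lemma colSymb_smulM (c : F) (A : Matrix (Fin m) (Fin n) F) (a w : ℕ) :
    colSymb (c • A) a w = c • colSymb A a w := by
  funext r k
  show colSymb (c • A) a w r k = c • colSymb A a w r k
  rw [colSymb, colSymb]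
  split_ifs with h
  · exact Matrix.smul_apply c A r _
  · simp

variable {w : ℕ} (C0 : Submodule F (Fin n → F)) (V0 : Submodule F (Fin m → Fin w → F)) (a : ℕ)

lemma olE_zero : (0 : Matrix (Fin m) (Fin n) F) ∈ OneLevelEII C0 V0 a := by
  refine ⟨fun r c _ => rfl, fun r => C0.zero_mem, ?_⟩
  rw [colSymb_zeroM]
  exact V0.zero_mem

lemma olE_add {A B : Matrix (Fin m) (Fin n) F} (hA : A ∈ OneLevelEII C0 V0 a)
    (hB : B ∈ OneLevelEII C0 V0 a) : A + B ∈ OneLevelEII C0 V0 a := by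
  refine ⟨fun r c hc => ?_, fun r => ?_, ?_⟩
  · rw [Matrix.add_apply, hA.1 r c hc, hB.1 r c hc, add_zero]
  · exact C0.add_mem (hA.2.1 r) (hB.2.1 r)
  · rw [colSymb_addM]
    exact V0.add_mem hA.2.2 hB.2.2

lemma olE_smul (c : F) {A : Matrix (Fin m) (Fin n) F} (hA : A ∈ OneLevelEII C0 V0 a) :
    c • A ∈ OneLevelEII C0 V0 a := by
  refine ⟨fun r j hj => ?_, fun r => ?_, ?_⟩
  · rw [Matrix.smul_apply, hA.1 r j hj, smul_zero]
  · exact C0.smul_mem c (hA.2.1 r)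
  · rw [colSymb_smulM]
    exact V0.smul_mem c hA.2.2

end Closure

section Phi
variable {F : Type*} [Field F] [DecidableEq F] {t n m : ℕ}
variable (u : ℕ → ℕ) (Chor : ℕ → Submodule F (Fin n → F))
variable (Vc : (i : ℕ) → Submodule F (Fin m → Fin (u (i + 1) - u i) → F))

noncomputable def phiMap (hbij : ∀ i, i < t → Function.Bijective (piC u Chor i)) :
    ((i : Fin t) → ↥(Vc (i : ℕ))) →ₗ[F] Matrix (Fin m) (Fin n) F where
  toFun v := ∑ i : Fin t, psiF u Chor (i : ℕ) (hbij (i : ℕ) i.2) ↑(v i)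
  map_add' v w := by
    rw [← Finset.sum_add_distrib]
    apply Finset.sum_congr rfl
    intro i _
    rw [Pi.add_apply, Submodule.coe_add, psiF_add]
  map_smul' c v := by
    rw [RingHom.id_apply, Finset.smul_sum]
    apply Finset.sum_congr rfl
    intro i _
    rw [Pi.smul_apply, Submodule.coe_smul, psiF_smul]

lemma phiMap_apply (hbij : ∀ i, i < t → Function.Bijective (piC u Chor i))
    (v : (i : Fin t) → ↥(Vc (i : ℕ))) :
    phiMap u Chor Vc hbij v = ∑ i : Fin t, psiF u Chor (i : ℕ) (hbij (i : ℕ) i.2) ↑(v i) := rfl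

lemma phiMap_mem (hbij : ∀ i, i < t → Function.Bijective (piC u Chor i))
    (hu : ∀ i < t, u i < u (i + 1)) (hun : ∀ i, i ≤ t → u i ≤ n)
    (v : (i : Fin t) → ↥(Vc (i : ℕ))) :
    phiMap u Chor Vc hbij v ∈ EIICode t u Chor Vc := by
  refine ⟨fun j => if h : j < t then psiF u Chor j (hbij j h) ↑(v ⟨j, h⟩) else 0,
    fun i h0 hit => ?_, ?_⟩
  · simp only [dif_pos hit]
    exact psiF_mem u Chor i (hbij i hit) (hu i hit) (hun (i + 1) hit) Vc (v ⟨i, hit⟩).2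
  · rw [phiMap_apply, ← Finset.range_eq_Ico, Finset.sum_range]
    apply Finset.sum_congr rfl
    intro i _
    simp [dif_pos i.2]

lemma phiMap_inj (hbij : ∀ i, i < t → Function.Bijective (piC u Chor i))
    (hnest : ∀ i, i + 1 < t → Chor (i + 1) < Chor i)
    (hu : ∀ i < t, u i < u (i + 1)) (hun : ∀ i, i ≤ t → u i ≤ n)
    (hCdist : ∀ i < t, HasMinDist ((Chor i : Submodule F (Fin n → F)) : Set (Fin n → F)) (u i + 1)) :
    Function.Injective (phiMap u Chor Vc hbij) := by
  have h0 : ∀ v, phiMap u Chor Vc hbij v = 0 → v = 0 := by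
    intro v hv
    rw [phiMap_apply] at hv
    have hgsum : ∑ j ∈ Finset.Ico 0 t,
        (fun j => if h : j < t then psiF u Chor j (hbij j h)
          ((v ⟨j, h⟩ : ↥(Vc j)) : Fin m → Fin (u (j + 1) - u j) → F) else 0) j = 0 := by
      rw [← Finset.range_eq_Ico, Finset.sum_range, ← hv]
      apply Finset.sum_congr rfl
      intro i _
      simp [dif_pos i.2]
    have hrow : ∀ (r : Fin m) (i : ℕ) (h : i < t),
        psiF u Chor i (hbij i h) ↑(v ⟨i, h⟩) r = 0 := by
      intro r i h
      have hd := eii_direct u Chor hnest hu hun hCdist t 0 (by omega)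
        (fun j => (if hh : j < t then psiF u Chor j (hbij j hh)
          ((v ⟨j, hh⟩ : ↥(Vc j)) : Fin m → Fin (u (j + 1) - u j) → F) else 0) r)
        (fun i h0i hit => by
          simp only [dif_pos hit]
          exact psiF_row_mem u Chor i (hbij i hit) _ r)
        (fun i h0i hit j hj => by
          simp only [dif_pos hit]
          exact psiF_prefix u Chor i (hbij i hit) (le_of_lt (hu i hit)) _ r j hj)
        (by
          funext j
          rw [Finset.sum_apply]
          have h2 := congrFun (congrFun hgsum r) j
          rw [Matrix.sum_apply] at h2
          simpa using h2)
      have h3 := hd i (Nat.zero_le _) h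
      simp only [dif_pos h] at h3
      exact h3
    funext i
    apply Subtype.ext
    have hzero2 : psiF u Chor (i : ℕ) (hbij (i : ℕ) i.2)
        ((v i : ↥(Vc (i : ℕ))) : Fin m → Fin (u ((i : ℕ) + 1) - u (i : ℕ)) → F) = 0 := by
      funext r j
      have h4 : psiF u Chor (i : ℕ) (hbij (i : ℕ) i.2)
          ((v ⟨(i : ℕ), i.2⟩ : ↥(Vc (i : ℕ))) : Fin m → Fin (u ((i : ℕ) + 1) - u (i : ℕ)) → F) r = 0 :=
        hrow r (i : ℕ) i.2
      simp only [Fin.eta] at h4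
      rw [h4]
      rfl
    have h5 := psiF_eq_zero u Chor (i : ℕ) (hbij (i : ℕ) i.2) (hu (i : ℕ) i.2)
      (hun ((i : ℕ) + 1) i.2) hzero2
    simpa using h5
  exact LinearMap.ker_eq_bot.mp (LinearMap.ker_eq_bot'.mpr h0)

lemma phiMap_surj (hbij : ∀ i, i < t → Function.Bijective (piC u Chor i))
    (hu : ∀ i < t, u i < u (i + 1)) (hun : ∀ i, i ≤ t → u i ≤ n)
    {A : Matrix (Fin m) (Fin n) F} (hA : A ∈ EIICode t u Chor Vc) :
    ∃ v, phiMap u Chor Vc hbij v = A := by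
  obtain ⟨g, hg, hAs⟩ := hA
  refine ⟨fun i : Fin t => ⟨colSymb (g (i : ℕ)) (n - u ((i : ℕ) + 1))
    (u ((i : ℕ) + 1) - u (i : ℕ)), (hg (i : ℕ) (Nat.zero_le _) i.2).2.2⟩, ?_⟩
  rw [phiMap_apply, hAs, ← Finset.range_eq_Ico, Finset.sum_range]
  apply Finset.sum_congr rfl
  intro i _
  exact psiF_recover u Chor (i : ℕ) (hbij (i : ℕ) i.2) (hu (i : ℕ) i.2)
    (hun ((i : ℕ) + 1) i.2) Vc (hg (i : ℕ) (Nat.zero_le _) i.2)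

end Phi


/-- If in a t-level EII code with `u_t = n` all horizontal codes are
MDS `[n, n−u_i, u_i+1]` codes and all vertical codes are MDS `[m, m−ŝ_{i+1}, ŝ_{i+1}+1]`
codes over `F^{u_{i+1}−u_i}`, then the code has dimension `mn − Σ s_i·u_i` and minimum
distance `d ≥ min {(u_i+1)(ŝ_{i+1}+1) : 0 ≤ i ≤ t−1}`. -/
theorem stmt5 {F : Type*} [Field F] [DecidableEq F]
    {t n m : ℕ} (ht : 1 ≤ t)
    (u s : ℕ → ℕ)
    (hu : ∀ i < t, u i < u (i + 1)) (hutn : u t = n)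
    (hs : ∀ i < t, 1 ≤ s i)
    (hm : m = ∑ i ∈ Finset.range (t + 1), s i)
    (Chor : ℕ → Submodule F (Fin n → F))
    (hnest : ∀ i, i + 1 < t → Chor (i + 1) < Chor i)
    (hCdim : ∀ i < t, Module.finrank F (Chor i) = n - u i)
    (hCsys : ∀ i < t, SystematicOn (Chor i) (n - u i))
    (hCdist : ∀ i < t, HasMinDist (Chor i : Set (Fin n → F)) (u i + 1))
    (Vc : (i : ℕ) → Submodule F (Fin m → Fin (u (i + 1) - u i) → F))
    (hVdim : ∀ i < t, Module.finrank F (Vc i)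
        = (m - ∑ j ∈ Finset.Icc (i + 1) t, s j) * (u (i + 1) - u i))
    (hVdist : ∀ i < t, HasMinDist (Vc i : Set (Fin m → Fin (u (i + 1) - u i) → F))
        ((∑ j ∈ Finset.Icc (i + 1) t, s j) + 1)) :
    (∃ W : Submodule F (Matrix (Fin m) (Fin n) F),
      (W : Set (Matrix (Fin m) (Fin n) F)) = EIICode t u Chor Vc ∧
      Module.finrank F W = m * n - ∑ i ∈ Finset.range (t + 1), s i * u i) ∧
    (∀ A ∈ EIICode t u Chor Vc, A ≠ 0 →
      (Finset.range t).inf' (Finset.nonempty_range_iff.mpr (by omega))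
        (fun i => (u i + 1) * ((∑ j ∈ Finset.Icc (i + 1) t, s j) + 1)) ≤ arrayWt A) := by
  -- monotonicity facts
  have hmono : ∀ i j, i ≤ j → j ≤ t → u i ≤ u j := by
    intro i j hij hjt
    induction j with
    | zero => cases Nat.le_zero.mp hij; exact le_refl _
    | succ j ihj =>
      rcases Nat.lt_or_ge i (j + 1) with h | h
      · exact le_trans (ihj (by omega) (by omega)) (le_of_lt (hu j (by omega)))
      · have : i = j + 1 := by omega
        subst this; exact le_refl _
  have hun : ∀ i, i ≤ t → u i ≤ n := by
    intro i hi
    rw [← hutn]; exact hmono i t hi (le_refl t)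
  have hbij : ∀ i, i < t → Function.Bijective (piC u Chor i) :=
    fun i hi => piC_bij u Chor (hCdim i hi) (hCdist i hi)
  -- the submodule W
  have hadd : ∀ {A B : Matrix (Fin m) (Fin n) F}, A ∈ EIICode t u Chor Vc →
      B ∈ EIICode t u Chor Vc → A + B ∈ EIICode t u Chor Vc := by
    rintro A B ⟨g, hg, hA⟩ ⟨h, hh, hB⟩
    refine ⟨fun i => g i + h i, fun i h0 hit => olE_add _ _ _ (hg i h0 hit) (hh i h0 hit), ?_⟩
    rw [hA, hB, Finset.sum_add_distrib]
  have hzero : (0 : Matrix (Fin m) (Fin n) F) ∈ EIICode t u Chor Vc := by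
    refine ⟨fun _ => 0, fun i h0 hit => olE_zero _ _ _, ?_⟩
    rw [Finset.sum_const, smul_zero]
  have hsmul : ∀ (c : F) {A : Matrix (Fin m) (Fin n) F}, A ∈ EIICode t u Chor Vc →
      c • A ∈ EIICode t u Chor Vc := by
    rintro c A ⟨g, hg, hA⟩
    refine ⟨fun i => c • g i, fun i h0 hit => olE_smul _ _ _ c (hg i h0 hit), ?_⟩
    rw [hA, Finset.smul_sum]
  let W : Submodule F (Matrix (Fin m) (Fin n) F) :=
    { carrier := EIICode t u Chor Vc,
      add_mem' := fun hA hB => hadd hA hB,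
      zero_mem' := hzero,
      smul_mem' := fun c {A} hA => hsmul c hA }
  refine ⟨⟨W, rfl, ?_⟩, ?_⟩
  · -- dimension
    have hrange : LinearMap.range (phiMap u Chor Vc hbij) = W := by
      apply Submodule.ext
      intro A
      constructor
      · rintro ⟨v, rfl⟩
        exact phiMap_mem u Chor Vc hbij hu hun v
      · intro hA
        exact phiMap_surj u Chor Vc hbij hu hun hA
    have hW : Module.finrank F W
        = Module.finrank F ((i : Fin t) → ↥(Vc (i : ℕ))) := by
      rw [← hrange]
      exact LinearMap.finrank_range_of_inj (phiMap_inj u Chor Vc hbij hnest hu hun hCdist)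
    rw [hW, Module.finrank_pi_fintype,
      ← Finset.sum_range (fun i => Module.finrank F ↥(Vc i)),
      Finset.sum_congr rfl (fun i hi => hVdim i (Finset.mem_range.mp hi))]
    exact dim_count u s hu hutn hm ht
  · -- distance
    intro A hA hAne
    obtain ⟨g, hg, hAs⟩ := hA
    have hne : ((Finset.range t).filter (fun i => g i ≠ 0)).Nonempty := by
      by_contra hemp
      rw [Finset.not_nonempty_iff_eq_empty] at hemp
      apply hAne
      rw [hAs]
      apply Finset.sum_eq_zero
      intro i hi
      rw [Finset.mem_Ico] at hi
      by_contra hgi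
      have hmemf : i ∈ (Finset.range t).filter (fun i => g i ≠ 0) :=
        Finset.mem_filter.mpr ⟨Finset.mem_range.mpr hi.2, hgi⟩
      rw [hemp] at hmemf
      exact absurd hmemf (Finset.notMem_empty i)
    set i0 := ((Finset.range t).filter (fun i => g i ≠ 0)).min' hne with hi0def
    have hi0mem := Finset.min'_mem _ hne
    rw [← hi0def, Finset.mem_filter, Finset.mem_range] at hi0mem
    obtain ⟨hi0t, hgi0⟩ := hi0mem
    have hless : ∀ i, i < i0 → g i = 0 := by
      intro i hii0
      by_contra hgi
      have hit : i < t := by omega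
      have hmem2 : i ∈ (Finset.range t).filter (fun i => g i ≠ 0) :=
        Finset.mem_filter.mpr ⟨Finset.mem_range.mpr hit, hgi⟩
      have := Finset.min'_le _ i hmem2
      omega
    have hrowsA : ∀ r, A r ∈ Chor i0 := by
      intro r
      have hArs : A r = ∑ i ∈ Finset.Ico 0 t, g i r := by
        funext j
        rw [Finset.sum_apply, hAs, Matrix.sum_apply]
      rw [hArs]
      apply Submodule.sum_mem
      intro i hi
      rw [Finset.mem_Ico] at hi
      rcases Nat.lt_or_ge i i0 with h | h
      · rw [hless i h]
        exact Submodule.zero_mem _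
      · exact chor_anti Chor hnest i0 i h hi.2 ((hg i hi.1 hi.2).2.1 r)
    have hrowzero : ∀ r, A r = 0 → g i0 r = 0 := by
      intro r hr
      have hd := eii_direct u Chor hnest hu hun hCdist t 0 (by omega) (fun i => g i r)
        (fun i h0 hit => (hg i h0 hit).2.1 r)
        (fun i h0 hit j hj => (hg i h0 hit).1 r j hj)
        (by
          funext j
          rw [Finset.sum_apply]
          have h2 := congrFun (congrFun hAs r) j
          rw [Matrix.sum_apply] at h2
          rw [← h2, hr])
      exact hd i0 (Nat.zero_le _) hi0t
    have hv : colSymb (g i0) (n - u (i0 + 1)) (u (i0 + 1) - u i0) ∈ Vc i0 :=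
      (hg i0 (Nat.zero_le _) hi0t).2.2
    have hvne : colSymb (g i0) (n - u (i0 + 1)) (u (i0 + 1) - u i0) ≠ 0 := by
      intro hv0
      apply hgi0
      funext r j
      have hr0 : g i0 r = 0 := by
        refine row_zero u Chor (le_of_lt (hu i0 hi0t)) (hun (i0 + 1) hi0t) (hCdist i0 hi0t)
          ((hg i0 (Nat.zero_le _) hi0t).2.1 r)
          (fun j hj => (hg i0 (Nat.zero_le _) hi0t).1 r j hj) ?_
        intro k
        exact congrFun (congrFun hv0 r) k
      exact congrFun hr0 j
    have hwt := (hVdist i0 hi0t).1 _ hv hvne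
    have hrowbound : ∀ r, colSymb (g i0) (n - u (i0 + 1)) (u (i0 + 1) - u i0) r ≠ 0 →
        u i0 + 1 ≤ hammingNorm (A r) := by
      intro r hvr
      have hAr : A r ≠ 0 := by
        intro h0
        apply hvr
        have hgr := hrowzero r h0
        funext k
        show (if hk : n - u (i0 + 1) + (k : ℕ) < n
          then g i0 r ⟨n - u (i0 + 1) + k, hk⟩ else 0) = 0
        split_ifs with h
        · exact congrFun hgr _
        · rfl
      exact (hCdist i0 hi0t).1 (A r) (hrowsA r) hAr
    have hwt' : (∑ j ∈ Finset.Icc (i0 + 1) t, s j) + 1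
        ≤ (Finset.univ.filter (fun r : Fin m =>
            colSymb (g i0) (n - u (i0 + 1)) (u (i0 + 1) - u i0) r ≠ 0)).card := hwt
    have hfin : (u i0 + 1) * ((∑ j ∈ Finset.Icc (i0 + 1) t, s j) + 1) ≤ arrayWt A := by
      rw [arrayWt_eq_sum]
      calc (u i0 + 1) * ((∑ j ∈ Finset.Icc (i0 + 1) t, s j) + 1)
          = ((∑ j ∈ Finset.Icc (i0 + 1) t, s j) + 1) * (u i0 + 1) := mul_comm _ _
        _ ≤ (Finset.univ.filter (fun r : Fin m =>
              colSymb (g i0) (n - u (i0 + 1)) (u (i0 + 1) - u i0) r ≠ 0)).card * (u i0 + 1) :=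
            Nat.mul_le_mul hwt' (le_refl _)
        _ = ∑ _r ∈ Finset.univ.filter (fun r : Fin m =>
              colSymb (g i0) (n - u (i0 + 1)) (u (i0 + 1) - u i0) r ≠ 0), (u i0 + 1) := by
            rw [Finset.sum_const, smul_eq_mul]
        _ ≤ ∑ r ∈ Finset.univ.filter (fun r : Fin m =>
              colSymb (g i0) (n - u (i0 + 1)) (u (i0 + 1) - u i0) r ≠ 0), hammingNorm (A r) :=
            Finset.sum_le_sum (fun r hr => hrowbound r (Finset.mem_filter.mp hr).2)
        _ ≤ ∑ r : Fin m, hammingNorm (A r) :=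
            Finset.sum_le_sum_of_subset (Finset.filter_subset _ _)
    exact le_trans (Finset.inf'_le _ (Finset.mem_range.mpr hi0t)) hfin
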